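/- For $p \in [1, \infty)$ and $\alpha \in (0,2)$, the constant $R(2,p,\alpha) := 2^\alpha \int_{[0,1]^2} (y_1^p + y_2^p)^{-\alpha/p}\, dy_1\, dy_2$ satisfies $R(2,p,\alpha) = \frac{2^\alpha p^{-2}}{\Gamma(\alpha/p)} \cdot \frac{2p}{2-\alpha} \int_0^\infty t^{(\alpha-1)/p - 1}\, \gamma(1/p, t)\, e^{-t}\, dt$, where $\gamma(1/p,t)$ is the lower incomplete gamma function. -/

import Mathlib

open MeasureTheory Real intervalIntegral Set
open scoped ENNReal

lemma image_mul_rpow {p t : ℝ} (hp : 1 ≤ p) (ht : 0 < t) :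
    (fun y : ℝ => t * y ^ p) '' Set.Ioo 0 1 = Set.Ioo 0 t := by
  have hp0 : 0 < p := lt_of_lt_of_le one_pos hp
  ext z
  constructor
  · rintro ⟨y, ⟨hy0, hy1⟩, rfl⟩
    refine ⟨by positivity, ?_⟩
    have h1 : y ^ p < 1 := Real.rpow_lt_one hy0.le hy1 hp0
    calc t * y ^ p < t * 1 := by
          exact mul_lt_mul_of_pos_left h1 ht
      _ = t := mul_one t
  · rintro ⟨hz0, hzt⟩
    have hzt' : z / t < 1 := (div_lt_one ht).2 hzt
    have hzt0 : 0 < z / t := div_pos hz0 ht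
    refine ⟨(z / t) ^ (1 / p), ⟨Real.rpow_pos_of_pos hzt0 _,
      Real.rpow_lt_one hzt0.le hzt' (by positivity)⟩, ?_⟩
    have : ((z / t) ^ (1 / p)) ^ p = z / t := by
      rw [← Real.rpow_mul hzt0.le, one_div_mul_cancel hp0.ne', Real.rpow_one]
    show t * ((z / t) ^ (1 / p)) ^ p = z
    rw [this]; field_simp

lemma injOn_mul_rpow {p t : ℝ} (hp : 1 ≤ p) (ht : 0 < t) :
    Set.InjOn (fun y : ℝ => t * y ^ p) (Set.Ioo 0 1) := by
  have hp0 : 0 < p := lt_of_lt_of_le one_pos hp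
  have : StrictMonoOn (fun y : ℝ => t * y ^ p) (Set.Ioo 0 1) := by
    intro x hx y hy hxy
    exact mul_lt_mul_of_pos_left (Real.rpow_lt_rpow hx.1.le hxy hp0) ht
  exact this.injOn

lemma gamma_sub {p t : ℝ} (hp : 1 ≤ p) (ht : 0 < t) :
    ∫ z in Set.Ioo (0:ℝ) t, z ^ (1/p - 1) * Real.exp (-z)
      = ∫ y in Set.Ioo (0:ℝ) 1, (p * t ^ (1/p)) * Real.exp (-(t * y ^ p)) := by
  have hp0 : 0 < p := lt_of_lt_of_le one_pos hp
  have hder : ∀ y ∈ Set.Ioo (0:ℝ) 1, HasDerivWithinAt (fun y : ℝ => t * y ^ p)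
      (t * (p * y ^ (p-1))) (Set.Ioo 0 1) y := by
    intro y hy
    exact ((Real.hasDerivAt_rpow_const (Or.inr hp)).const_mul t).hasDerivWithinAt
  have := integral_image_eq_integral_abs_deriv_smul measurableSet_Ioo hder
    (injOn_mul_rpow hp ht) (fun z => z ^ (1/p - 1) * Real.exp (-z))
  rw [image_mul_rpow hp ht] at this
  rw [this]
  refine setIntegral_congr_fun measurableSet_Ioo (fun y hy => ?_)
  obtain ⟨hy0, hy1⟩ := hy
  have hyp : (0:ℝ) < y ^ p := Real.rpow_pos_of_pos hy0 _
  have habs : |t * (p * y ^ (p-1))| = t * (p * y ^ (p-1)) := by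
    have : (0:ℝ) < y ^ (p-1) := Real.rpow_pos_of_pos hy0 _
    rw [abs_of_nonneg]; positivity
  have h1 : (t * y ^ p) ^ (1/p - 1) = t ^ (1/p-1) * y ^ (1 - p) := by
    rw [Real.mul_rpow ht.le (Real.rpow_pos_of_pos hy0 p).le, ← Real.rpow_mul hy0.le]
    congr 2
    field_simp
  rw [smul_eq_mul, habs, h1]
  have h2 : y ^ (p-1) * y ^ (1-p) = 1 := by
    rw [← Real.rpow_add hy0]; norm_num
  have h3 : t * t ^ (1/p - 1) = t ^ (1/p) := by
    nth_rewrite 1 [← Real.rpow_one t]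
    rw [← Real.rpow_add ht]; ring_nf
  calc t * (p * y ^ (p-1)) * (t ^ (1/p-1) * y ^ (1-p) * Real.exp (-(t * y ^ p)))
      = (t * t ^ (1/p-1)) * p * (y ^ (p-1) * y ^ (1-p)) * Real.exp (-(t * y ^ p)) := by ring
    _ = p * t ^ (1/p) * Real.exp (-(t * y ^ p)) := by rw [h2, h3]; ring

lemma image_mul_Ioo {a : ℝ} (ha : 0 < a) :
    (fun u : ℝ => a * u) '' Set.Ioo 0 1 = Set.Ioo 0 a := by
  have h := image_mul_rpow (p := 1) (t := a) le_rfl ha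
  simpa [Real.rpow_one] using h

lemma inner_sub {p α a : ℝ} (hp : 1 ≤ p) (ha : 0 < a) :
    ∫ b in Set.Ioo (0:ℝ) a, (a ^ p + b ^ p) ^ (-(α/p))
      = ∫ u in Set.Ioo (0:ℝ) 1, a ^ (1-α) * (1 + u ^ p) ^ (-(α/p)) := by
  have hp0 : 0 < p := lt_of_lt_of_le one_pos hp
  have hder : ∀ u ∈ Set.Ioo (0:ℝ) 1, HasDerivWithinAt (fun u : ℝ => a * u)
      a (Set.Ioo 0 1) u := by
    intro u hu
    simpa using ((hasDerivAt_id u).const_mul a).hasDerivWithinAt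
  have hinj : Set.InjOn (fun u : ℝ => a * u) (Set.Ioo 0 1) :=
    fun x _ y _ h => mul_left_cancel₀ ha.ne' h
  have := integral_image_eq_integral_abs_deriv_smul measurableSet_Ioo hder hinj
    (fun b => (a ^ p + b ^ p) ^ (-(α/p)))
  rw [image_mul_Ioo ha] at this
  rw [this]
  refine setIntegral_congr_fun measurableSet_Ioo (fun u hu => ?_)
  obtain ⟨hu0, hu1⟩ := hu
  have hap : (0:ℝ) < a ^ p := Real.rpow_pos_of_pos ha _
  have hup : (0:ℝ) < u ^ p := Real.rpow_pos_of_pos hu0 _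
  have h1 : (a * u) ^ p = a ^ p * u ^ p := Real.mul_rpow ha.le hu0.le
  have h2 : a ^ p + a ^ p * u ^ p = a ^ p * (1 + u ^ p) := by ring
  have h3 : (a ^ p * (1 + u ^ p)) ^ (-(α/p))
      = a ^ (-α) * (1 + u ^ p) ^ (-(α/p)) := by
    rw [Real.mul_rpow hap.le (by positivity), ← Real.rpow_mul ha.le]
    congr 2
    field_simp
  rw [smul_eq_mul, abs_of_pos ha, h1, h2, h3]
  have h4 : a * a ^ (-α) = a ^ (1-α) := by
    nth_rewrite 1 [← Real.rpow_one a]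
    rw [← Real.rpow_add ha]; ring_nf
  rw [← mul_assoc, h4]

lemma meas_aux {p α c : ℝ} : Measurable fun b : ℝ => (c + b ^ p) ^ (-(α/p)) := by
  have h1 : Measurable fun b : ℝ => b ^ p := by fun_prop
  have : Measurable fun b : ℝ => c + b ^ p := measurable_const.add h1
  fun_prop

lemma rpow_base_pow {p α a : ℝ} (hp0 : 0 < p) (ha : 0 < a) :
    (a ^ p) ^ (-(α/p)) = a ^ (-α) := by
  rw [← Real.rpow_mul ha.le]
  congr 1
  field_simp

lemma integrableOn_inner {p α a : ℝ} (hp : 1 ≤ p) (hα : 0 < α) (ha : 0 < a) :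
    IntegrableOn (fun b : ℝ => (a ^ p + b ^ p) ^ (-(α/p))) (Set.Ioo 0 a) := by
  have hp0 : 0 < p := lt_of_lt_of_le one_pos hp
  apply Measure.integrableOn_of_bounded (M := a ^ (-α))
  · simp [Real.volume_Ioo]
  · exact meas_aux.aestronglyMeasurable
  · filter_upwards [ae_restrict_mem measurableSet_Ioo] with b hb
    obtain ⟨hb0, hba⟩ := hb
    have hap : (0:ℝ) < a ^ p := Real.rpow_pos_of_pos ha _
    have hbp : (0:ℝ) < b ^ p := Real.rpow_pos_of_pos hb0 _
    have hnn : (0:ℝ) ≤ (a ^ p + b ^ p) ^ (-(α/p)) := Real.rpow_nonneg (by positivity) _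
    rw [Real.norm_eq_abs, abs_of_nonneg hnn, ← rpow_base_pow hp0 ha (α := α)]
    exact Real.rpow_le_rpow_of_nonpos hap (by linarith)
      (neg_nonpos.2 (by positivity))

lemma integrableOn_C {p α : ℝ} (hp : 1 ≤ p) (hα : 0 < α) :
    IntegrableOn (fun u : ℝ => (1 + u ^ p) ^ (-(α/p))) (Set.Ioo 0 1) := by
  have hp0 : 0 < p := lt_of_lt_of_le one_pos hp
  apply Measure.integrableOn_of_bounded (M := 1)
  · simp [Real.volume_Ioo]
  · exact meas_aux.aestronglyMeasurable
  · filter_upwards [ae_restrict_mem measurableSet_Ioo] with u hu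
    obtain ⟨hu0, hu1⟩ := hu
    have hup : (0:ℝ) < u ^ p := Real.rpow_pos_of_pos hu0 _
    have hnn : (0:ℝ) ≤ (1 + u ^ p) ^ (-(α/p)) := Real.rpow_nonneg (by positivity) _
    rw [Real.norm_eq_abs, abs_of_nonneg hnn]
    calc (1 + u ^ p) ^ (-(α/p)) ≤ (1:ℝ) ^ (-(α/p)) :=
          Real.rpow_le_rpow_of_nonpos one_pos (by linarith)
            (neg_nonpos.2 (by positivity))
      _ = 1 := Real.one_rpow _

lemma lint_inner {p α a : ℝ} (hp : 1 ≤ p) (hα : 0 < α) (ha : 0 < a) :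
    ∫⁻ b in Set.Ioo (0:ℝ) a, ENNReal.ofReal ((a ^ p + b ^ p) ^ (-(α/p)))
      = ENNReal.ofReal (a ^ (1-α) * ∫ u in Set.Ioo (0:ℝ) 1, (1 + u ^ p) ^ (-(α/p))) := by
  have hnn : 0 ≤ᵐ[volume.restrict (Set.Ioo (0:ℝ) a)]
      fun b : ℝ => (a ^ p + b ^ p) ^ (-(α/p)) := by
    filter_upwards [ae_restrict_mem measurableSet_Ioo] with b hb
    have : (0:ℝ) < b ^ p := Real.rpow_pos_of_pos hb.1 _
    have : (0:ℝ) < a ^ p := Real.rpow_pos_of_pos ha _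
    exact Real.rpow_nonneg (by positivity) _
  rw [← ofReal_integral_eq_lintegral_ofReal (integrableOn_inner hp hα ha) hnn]
  congr 1
  rw [inner_sub hp ha (α := α), MeasureTheory.integral_const_mul]

lemma lint_pow {α c : ℝ} (hα2 : α < 2) (hc : 0 ≤ c) :
    ∫⁻ x in Set.Ioo (0:ℝ) 1, ENNReal.ofReal (x ^ (1-α) * c)
      = ENNReal.ofReal ((2-α)⁻¹ * c) := by
  have h := (intervalIntegral.intervalIntegrable_rpow' (a := 0) (b := 1)
      (r := 1-α) (by linarith)).1
  have hrint : IntegrableOn (fun x : ℝ => x ^ (1-α)) (Set.Ioo 0 1) :=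
    h.mono_set Set.Ioo_subset_Ioc_self
  have hint : IntegrableOn (fun x : ℝ => x ^ (1-α) * c) (Set.Ioo 0 1) :=
    hrint.mul_const c
  have hnn : 0 ≤ᵐ[volume.restrict (Set.Ioo (0:ℝ) 1)]
      fun x : ℝ => x ^ (1-α) * c := by
    filter_upwards [ae_restrict_mem measurableSet_Ioo] with x hx
    exact mul_nonneg (Real.rpow_nonneg hx.1.le _) hc
  rw [← ofReal_integral_eq_lintegral_ofReal hint hnn]
  congr 1
  rw [MeasureTheory.integral_mul_const]
  have : ∫ x in Set.Ioo (0:ℝ) 1, x ^ (1-α) = (2-α)⁻¹ := by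
    rw [← MeasureTheory.integral_Ioc_eq_integral_Ioo,
      ← intervalIntegral.integral_of_le (zero_le_one' ℝ),
      integral_rpow (Or.inl (by linarith))]
    rw [Real.one_rpow, Real.zero_rpow (by linarith : (1:ℝ)-α+1 ≠ 0)]
    norm_num
    rw [show (1:ℝ)-α+1 = 2-α by ring]
  rw [this]

lemma lint_sec {s : Set ℝ} (hs : MeasurableSet s) (h : ℝ → ℝ≥0∞) (t : Set ℝ) :
    ∫⁻ x in t, s.indicator h x = ∫⁻ x in s ∩ t, h x := by
  rw [lintegral_indicator hs, Measure.restrict_restrict hs]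

lemma lhs_main {p α : ℝ} (hp : 1 ≤ p) (hα : 0 < α) (hα2 : α < 2) :
    ∫ y in Set.Icc (0 : Fin 2 → ℝ) 1, ((y 0) ^ p + (y 1) ^ p) ^ (-(α / p))
      = 2 * ((2 - α)⁻¹ * ∫ u in Set.Ioo (0:ℝ) 1, (1 + u ^ p) ^ (-(α/p))) := by
  have hp0 : 0 < p := lt_of_lt_of_le one_pos hp
  set C : ℝ := ∫ u in Set.Ioo (0:ℝ) 1, (1 + u ^ p) ^ (-(α/p)) with hC
  have hC0 : 0 ≤ C := by
    apply setIntegral_nonneg measurableSet_Ioo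
    intro u hu
    have : (0:ℝ) < u ^ p := Real.rpow_pos_of_pos hu.1 _
    exact Real.rpow_nonneg (by positivity) _
  set g : ℝ × ℝ → ℝ≥0∞ :=
    fun q => ENNReal.ofReal ((q.1 ^ p + q.2 ^ p) ^ (-(α/p))) with hg
  have hgm : Measurable g := by
    apply ENNReal.measurable_ofReal.comp
    have h1 : Measurable fun q : ℝ × ℝ => q.1 ^ p := by fun_prop
    have h2 : Measurable fun q : ℝ × ℝ => q.2 ^ p := by fun_prop
    have := h1.add h2
    fun_prop
  set J₁ : ℝ × ℝ → ℝ≥0∞ := Set.indicator {q : ℝ × ℝ | q.2 < q.1} g with hJ1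
  set J₂ : ℝ × ℝ → ℝ≥0∞ := Set.indicator {q : ℝ × ℝ | q.1 < q.2} g with hJ2
  have hJ1m : Measurable J₁ :=
    hgm.indicator (measurableSet_lt measurable_snd measurable_fst)
  have hJ2m : Measurable J₂ :=
    hgm.indicator (measurableSet_lt measurable_fst measurable_snd)
  have hfun1 : ∀ a : ℝ, (fun b => J₁ (a, b))
      = Set.indicator (Set.Iio a) (fun b => g (a, b)) := by
    intro a; ext b; by_cases h : b < a
    · simp [hJ1, Set.indicator_of_mem, h, Set.mem_setOf_eq, Set.mem_Iio]
    · simp [hJ1, Set.indicator_of_notMem, h, Set.mem_setOf_eq, Set.mem_Iio]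
  have hfun2a : ∀ a : ℝ, (fun b => J₂ (a, b))
      = Set.indicator (Set.Ioi a) (fun b => g (a, b)) := by
    intro a; ext b; by_cases h : a < b
    · simp [hJ2, Set.indicator_of_mem, h, Set.mem_setOf_eq, Set.mem_Ioi]
    · simp [hJ2, Set.indicator_of_notMem, h, Set.mem_setOf_eq, Set.mem_Ioi]
  have hfun2b : ∀ b : ℝ, (fun a => J₂ (a, b))
      = Set.indicator (Set.Iio b) (fun a => g (a, b)) := by
    intro b; ext a; by_cases h : a < b
    · simp [hJ2, Set.indicator_of_mem, h, Set.mem_setOf_eq, Set.mem_Iio]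
    · simp [hJ2, Set.indicator_of_notMem, h, Set.mem_setOf_eq, Set.mem_Iio]
  have htri : ∀ a ∈ Set.Ioo (0:ℝ) 1, (∫⁻ b in Set.Ioo (0:ℝ) 1, J₁ (a, b))
      = ENNReal.ofReal (a ^ (1-α) * C) := by
    intro a ha
    rw [hfun1 a, lint_sec measurableSet_Iio]
    have hset : Set.Iio a ∩ Set.Ioo (0:ℝ) 1 = Set.Ioo 0 a := by
      ext x
      constructor
      · rintro ⟨h1, h2, h3⟩; exact ⟨h2, h1⟩
      · rintro ⟨h1, h2⟩; exact ⟨h2, h1, h2.trans ha.2⟩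
    rw [hset]
    exact lint_inner hp hα ha.1
  have htri2 : ∀ b ∈ Set.Ioo (0:ℝ) 1, (∫⁻ a in Set.Ioo (0:ℝ) 1, J₂ (a, b))
      = ENNReal.ofReal (b ^ (1-α) * C) := by
    intro b hb
    rw [hfun2b b, lint_sec measurableSet_Iio]
    have hset : Set.Iio b ∩ Set.Ioo (0:ℝ) 1 = Set.Ioo 0 b := by
      ext x
      constructor
      · rintro ⟨h1, h2, h3⟩; exact ⟨h2, h1⟩
      · rintro ⟨h1, h2⟩; exact ⟨h2, h1, h2.trans hb.2⟩
    rw [hset]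
    have hsymm : ∀ x ∈ Set.Ioo (0:ℝ) b, g (x, b)
        = ENNReal.ofReal ((b ^ p + x ^ p) ^ (-(α/p))) := by
      intro x _
      simp only [hg]
      rw [add_comm]
    rw [setLIntegral_congr_fun measurableSet_Ioo
      hsymm]
    exact lint_inner hp hα hb.1
  have hsplit : ∀ a ∈ Set.Ioo (0:ℝ) 1, (∫⁻ b in Set.Ioo (0:ℝ) 1, g (a, b))
      = (∫⁻ b in Set.Ioo (0:ℝ) 1, J₁ (a, b))
        + ∫⁻ b in Set.Ioo (0:ℝ) 1, J₂ (a, b) := by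
    intro a ha
    rw [hfun1 a, hfun2a a, lint_sec measurableSet_Iio, lint_sec measurableSet_Ioi]
    have hset1 : Set.Iio a ∩ Set.Ioo (0:ℝ) 1 = Set.Ioo 0 a := by
      ext x
      constructor
      · rintro ⟨h1, h2, h3⟩; exact ⟨h2, h1⟩
      · rintro ⟨h1, h2⟩; exact ⟨h2, h1, h2.trans ha.2⟩
    have hset2 : Set.Ioi a ∩ Set.Ioo (0:ℝ) 1 = Set.Ioo a 1 := by
      ext x
      constructor
      · rintro ⟨h1, h2, h3⟩; exact ⟨h1, h3⟩
      · rintro ⟨h1, h2⟩; exact ⟨h1, ha.1.trans h1, h2⟩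
    rw [hset1, hset2,
      ← lintegral_union measurableSet_Ioo
        (by rw [Set.disjoint_left]; rintro x ⟨_, h2⟩ h3
            exact absurd h3.1 (not_lt.2 h2.le))]
    have hae : Set.Ioo (0:ℝ) 1 =ᵐ[volume]
        (Set.Ioo 0 a ∪ Set.Ioo a 1 : Set ℝ) := by
      rw [Filter.eventuallyEq_set]
      have hsub : ∀ x : ℝ, x ≠ a →
          (x ∈ Set.Ioo (0:ℝ) 1 ↔ x ∈ Set.Ioo 0 a ∪ Set.Ioo a 1) := by
        intro x hx
        constructor
        · rintro ⟨h1, h2⟩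
          rcases lt_or_gt_of_ne hx with h | h
          · exact Or.inl ⟨h1, h⟩
          · exact Or.inr ⟨h, h2⟩
        · rintro (⟨h1, h2⟩ | ⟨h1, h2⟩)
          · exact ⟨h1, h2.trans ha.2⟩
          · exact ⟨ha.1.trans h1, h2⟩
      have : {x : ℝ | x ≠ a} ∈ ae volume :=
        compl_mem_ae_iff.2 (measure_singleton a)
      filter_upwards [this] with x hx using hsub x hx
    rw [Measure.restrict_congr_set hae]
  have hmeas1 : Measurable fun a : ℝ => ∫⁻ b in Set.Ioo (0:ℝ) 1, J₁ (a, b) :=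
    hJ1m.lintegral_prod_right'
  have hJ2m' : Measurable fun q : ℝ × ℝ => J₂ (q.1, q.2) := by simpa using hJ2m
  have hswap : (∫⁻ a in Set.Ioo (0:ℝ) 1, ∫⁻ b in Set.Ioo (0:ℝ) 1, J₂ (a, b))
      = ∫⁻ b in Set.Ioo (0:ℝ) 1, ∫⁻ a in Set.Ioo (0:ℝ) 1, J₂ (a, b) :=
    lintegral_lintegral_swap hJ2m'.aemeasurable
  have L1 : (∫⁻ a in Set.Ioo (0:ℝ) 1, ∫⁻ b in Set.Ioo (0:ℝ) 1, J₁ (a, b))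
      = ENNReal.ofReal ((2-α)⁻¹ * C) := by
    rw [setLIntegral_congr_fun measurableSet_Ioo htri]
    exact lint_pow hα2 hC0
  have L2 : (∫⁻ a in Set.Ioo (0:ℝ) 1, ∫⁻ b in Set.Ioo (0:ℝ) 1, J₂ (a, b))
      = ENNReal.ofReal ((2-α)⁻¹ * C) := by
    rw [hswap, setLIntegral_congr_fun measurableSet_Ioo
      htri2]
    exact lint_pow hα2 hC0
  have hfm : Measurable fun y : Fin 2 → ℝ => ((y 0) ^ p + (y 1) ^ p) ^ (-(α / p)) := by
    have h0 : Measurable fun y : Fin 2 → ℝ => (y 0) ^ p := by fun_prop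
    have h1 : Measurable fun y : Fin 2 → ℝ => (y 1) ^ p := by fun_prop
    have := h0.add h1
    fun_prop
  have hnnf : 0 ≤ᵐ[volume.restrict (Set.Icc (0 : Fin 2 → ℝ) 1)]
      fun y => ((y 0) ^ p + (y 1) ^ p) ^ (-(α / p)) := by
    filter_upwards [ae_restrict_mem measurableSet_Icc] with y hy
    have h0 : (0:ℝ) ≤ y 0 := by have := hy.1 0; simpa using this
    have h1 : (0:ℝ) ≤ y 1 := by have := hy.1 1; simpa using this
    exact Real.rpow_nonneg
      (add_nonneg (Real.rpow_nonneg h0 _) (Real.rpow_nonneg h1 _)) _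
  rw [integral_eq_lintegral_of_nonneg_ae hnnf hfm.aestronglyMeasurable.restrict]
  have hpre : Set.Icc (0 : Fin 2 → ℝ) 1
      = MeasurableEquiv.finTwoArrow ⁻¹' (Set.Icc (0:ℝ) 1 ×ˢ Set.Icc (0:ℝ) 1) := by
    ext y
    simp only [MeasurableEquiv.finTwoArrow_apply, Set.mem_preimage, Set.mem_prod,
      Set.mem_Icc, Pi.le_def, Fin.forall_fin_two, Prod.le_def,
      Pi.zero_apply, Pi.one_apply]
    tauto
  have hcomp : ∀ y : Fin 2 → ℝ,
      ENNReal.ofReal (((y 0) ^ p + (y 1) ^ p) ^ (-(α / p)))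
        = g (MeasurableEquiv.finTwoArrow y) := fun y => rfl
  have hstep1 : (∫⁻ y in Set.Icc (0 : Fin 2 → ℝ) 1,
      ENNReal.ofReal (((y 0) ^ p + (y 1) ^ p) ^ (-(α / p))))
      = ∫⁻ q in Set.Icc (0:ℝ) 1 ×ˢ Set.Icc (0:ℝ) 1, g q := by
    rw [hpre]
    simp_rw [hcomp]
    exact (volume_preserving_finTwoArrow ℝ).setLIntegral_comp_preimage_emb
      (MeasurableEquiv.finTwoArrow).measurableEmbedding g _
  have hrestr : (volume : Measure (ℝ × ℝ)).restrict
      (Set.Icc (0:ℝ) 1 ×ˢ Set.Icc (0:ℝ) 1)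
      = (volume.restrict (Set.Ioo (0:ℝ) 1)).prod
          (volume.restrict (Set.Ioo (0:ℝ) 1)) := by
    rw [Measure.restrict_congr_set Ioo_ae_eq_Icc, Measure.prod_restrict,
      ← Measure.volume_eq_prod]
  have hnn' : (0:ℝ) ≤ (2-α)⁻¹ * C :=
    mul_nonneg (inv_nonneg.2 (by linarith)) hC0
  rw [hstep1]
  rw [show (∫⁻ q in Set.Icc (0:ℝ) 1 ×ˢ Set.Icc (0:ℝ) 1, g q)
      = ∫⁻ q, g q ∂((volume.restrict (Set.Ioo (0:ℝ) 1)).prod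
          (volume.restrict (Set.Ioo (0:ℝ) 1))) from by rw [← hrestr]]
  rw [lintegral_prod g hgm.aemeasurable]
  rw [setLIntegral_congr_fun measurableSet_Ioo
    hsplit]
  rw [lintegral_add_left hmeas1, L1, L2,
    ← ENNReal.ofReal_add hnn' hnn', ENNReal.toReal_ofReal (by linarith)]
  ring

lemma rhs_main {p α : ℝ} (hp : 1 ≤ p) (hα : 0 < α) (hα2 : α < 2) :
    (∫ t in Set.Ioi (0:ℝ), t ^ ((α - 1) / p - 1) *
        (∫ z in (0:ℝ)..t, z ^ (1 / p - 1) * Real.exp (-z)) * Real.exp (-t))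
      = p * (Real.Gamma (α / p)
          * ∫ u in Set.Ioo (0:ℝ) 1, (1 + u ^ p) ^ (-(α/p))) := by
  have hp0 : 0 < p := lt_of_lt_of_le one_pos hp
  have hap : 0 < α / p := by positivity
  set f : ℝ → ℝ → ℝ :=
    fun t y => t ^ (α/p - 1) * Real.exp (-((1 + y ^ p) * t)) with hf
  -- pointwise rewrite of the integrand on Ioi 0
  have hpt : ∀ t ∈ Set.Ioi (0:ℝ),
      t ^ ((α - 1) / p - 1) * (∫ z in (0:ℝ)..t, z ^ (1 / p - 1) * Real.exp (-z))
          * Real.exp (-t)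
        = p * ∫ y in Set.Ioo (0:ℝ) 1, f t y := by
    intro t ht
    rw [Set.mem_Ioi] at ht
    have hgam : (∫ z in (0:ℝ)..t, z ^ (1 / p - 1) * Real.exp (-z))
        = p * t ^ (1/p) * ∫ y in Set.Ioo (0:ℝ) 1, Real.exp (-(t * y ^ p)) := by
      rw [intervalIntegral.integral_of_le ht.le,
        MeasureTheory.integral_Ioc_eq_integral_Ioo, gamma_sub hp ht,
        MeasureTheory.integral_const_mul]
    rw [hgam]
    have hA : t ^ ((α - 1) / p - 1) * (p * t ^ (1/p)
          * ∫ y in Set.Ioo (0:ℝ) 1, Real.exp (-(t * y ^ p))) * Real.exp (-t)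
        = p * ∫ y in Set.Ioo (0:ℝ) 1,
            t ^ ((α - 1) / p - 1) * t ^ (1/p) * Real.exp (-t)
              * Real.exp (-(t * y ^ p)) := by
      rw [MeasureTheory.integral_const_mul (t ^ ((α - 1) / p - 1) * t ^ (1/p) * Real.exp (-t))]
      ring
    rw [hA]
    congr 1
    refine setIntegral_congr_fun measurableSet_Ioo (fun y hy => ?_)
    simp only [hf]
    have h1 : t ^ ((α - 1) / p - 1) * t ^ (1/p) = t ^ (α/p - 1) := by
      rw [← Real.rpow_add ht]
      congr 1
      field_simp
      ring
    have h2 : Real.exp (-t) * Real.exp (-(t * y ^ p))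
        = Real.exp (-((1 + y ^ p) * t)) := by
      rw [← Real.exp_add]
      congr 1
      ring
    calc t ^ ((α - 1) / p - 1) * t ^ (1/p) * Real.exp (-t) * Real.exp (-(t * y ^ p))
        = (t ^ ((α - 1) / p - 1) * t ^ (1/p))
            * (Real.exp (-t) * Real.exp (-(t * y ^ p))) := by ring
      _ = t ^ (α/p - 1) * Real.exp (-((1 + y ^ p) * t)) := by rw [h1, h2]
  rw [setIntegral_congr_fun measurableSet_Ioi hpt, MeasureTheory.integral_const_mul]
  congr 1
  have hFm : Measurable fun q : ℝ × ℝ => f q.1 q.2 := by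
    have h1 : Measurable fun q : ℝ × ℝ => q.1 ^ (α/p - 1) := by fun_prop
    have h2 : Measurable fun q : ℝ × ℝ => q.2 ^ p := by fun_prop
    have h4 : Measurable fun q : ℝ × ℝ => -((1 + q.2 ^ p) * q.1) :=
      ((measurable_const.add h2).mul measurable_fst).neg
    exact h1.mul (Real.measurable_exp.comp h4)
  have hGam : IntegrableOn (fun t : ℝ => t ^ (α/p - 1) * Real.exp (-t))
      (Set.Ioi (0:ℝ)) := by
    have h := Real.GammaIntegral_convergent hap
    exact h.congr_fun (fun x hx => mul_comm _ _) measurableSet_Ioi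
  have h2 : Integrable (fun _ : ℝ => (1:ℝ)) (volume.restrict (Set.Ioo (0:ℝ) 1)) :=
    integrableOn_const (by simp [Real.volume_Ioo])
  have hbound := MeasureTheory.Integrable.mul_prod hGam h2
  simp only [mul_one] at hbound
  have hint : Integrable (Function.uncurry f)
      ((volume.restrict (Set.Ioi (0:ℝ))).prod
        (volume.restrict (Set.Ioo (0:ℝ) 1))) := by
    apply hbound.mono'
    · exact hFm.aestronglyMeasurable
    · rw [Measure.prod_restrict]
      filter_upwards [ae_restrict_mem (measurableSet_Ioi.prod measurableSet_Ioo)]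
        with q hq
      obtain ⟨ht, hy⟩ := hq
      rw [Set.mem_Ioi] at ht
      have hyp : (0:ℝ) ≤ q.2 ^ p := (Real.rpow_pos_of_pos hy.1 p).le
      have hrp : (0:ℝ) ≤ q.1 ^ (α/p - 1) := Real.rpow_nonneg ht.le _
      have hb : Real.exp (-((1 + q.2 ^ p) * q.1)) ≤ Real.exp (-q.1) := by
        apply Real.exp_le_exp.2
        have : q.1 ≤ (1 + q.2 ^ p) * q.1 := le_mul_of_one_le_left ht.le (by linarith)
        linarith
      have hnn : (0:ℝ) ≤ Function.uncurry f q := by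
        apply mul_nonneg hrp (Real.exp_nonneg _)
      rw [Real.norm_eq_abs, abs_of_nonneg hnn]
      exact mul_le_mul_of_nonneg_left hb hrp
  rw [MeasureTheory.integral_integral_swap hint]
  have hin : ∀ y ∈ Set.Ioo (0:ℝ) 1, (∫ t in Set.Ioi (0:ℝ), f t y)
      = (1 + y ^ p) ^ (-(α/p)) * Real.Gamma (α/p) := by
    intro y hy
    have hr : 0 < 1 + y ^ p := by
      have := Real.rpow_pos_of_pos hy.1 p
      linarith
    have hI := Real.integral_rpow_mul_exp_neg_mul_Ioi hap hr
    simp only [hf]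
    rw [hI]
    congr 1
    rw [one_div, ← Real.rpow_neg_one (1 + y ^ p), ← Real.rpow_mul hr.le]
    norm_num
  rw [setIntegral_congr_fun measurableSet_Ioo hin, MeasureTheory.integral_mul_const]
  ring

/-- For `p ∈ [1,∞)` and `α ∈ (0,2)`, the constant
`R(2,p,α) = 2^α ∫_{[0,1]^2} (y_1^p + y_2^p)^{-α/p} dy` equals
`(2^α p^{-2}/Γ(α/p)) · (2p/(2-α)) ∫_0^∞ t^{(α-1)/p - 1} γ(1/p,t) e^{-t} dt`. -/
theorem R_two_p_alpha (p α : ℝ) (hp : 1 ≤ p) (hα : 0 < α) (hα2 : α < 2) :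
    (2 : ℝ) ^ α *
        ∫ y in Set.Icc (0 : Fin 2 → ℝ) 1, ((y 0) ^ p + (y 1) ^ p) ^ (-(α / p)) =
      ((2 : ℝ) ^ α * p ^ (-(2 : ℝ)) / Real.Gamma (α / p)) * (2 * p / (2 - α)) *
        ∫ t in Set.Ioi (0 : ℝ), t ^ ((α - 1) / p - 1) *
          (∫ z in (0:ℝ)..t, z ^ (1 / p - 1) * Real.exp (-z)) * Real.exp (-t) := by
  have hp0 : 0 < p := lt_of_lt_of_le one_pos hp
  have hap : 0 < α / p := by positivity
  have hΓ : 0 < Real.Gamma (α / p) := Real.Gamma_pos_of_pos hap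
  rw [lhs_main hp hα hα2, rhs_main hp hα hα2]
  have h2 : p ^ (-(2:ℝ)) = (p ^ (2:ℕ))⁻¹ := by
    rw [Real.rpow_neg hp0.le, show ((2:ℝ)) = ((2:ℕ):ℝ) by norm_num,
      Real.rpow_natCast]
  rw [h2]
  have hne : (2:ℝ) - α ≠ 0 := by linarith
  field_simp
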